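/- Let F(z) := Σ_{k=0}^∞ ( (1/2)_k / k! )² z^k for |z| < 1. Then for every ξ ∈ (−1,0) one has (1−ξ) F(ξ)² > 1 and (1−ξ²) F(ξ)² < 1. -/
import Mathlib


open Real Set

noncomputable section

/-- The Gauss hypergeometric function `₂F₁(1/2, 1/2; 1; z)` as a power series. -/
def Fhyp (z : ℝ) : ℝ :=
  ∑' k : ℕ, ((ascPochhammer ℝ k).eval (1 / 2) / (Nat.factorial k : ℝ)) ^ 2 * z ^ k

namespace Stmt7Aux

def b (k : ℕ) : ℝ := (ascPochhammer ℝ k).eval (1 / 2) / (Nat.factorial k : ℝ)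

lemma b_zero : b 0 = 1 := by simp [b]

lemma b_succ (k : ℕ) : b (k + 1) = b k * ((1 / 2 + k) / (k + 1)) := by
  have hk : (Nat.factorial k : ℝ) ≠ 0 := Nat.cast_ne_zero.mpr k.factorial_ne_zero
  have hk1 : ((k : ℝ) + 1) ≠ 0 := by positivity
  rw [b, b, ascPochhammer_succ_right, Polynomial.eval_mul, Polynomial.eval_add,
    Polynomial.eval_X, Polynomial.eval_natCast, Nat.factorial_succ, Nat.cast_mul,
    Nat.cast_add, Nat.cast_one, div_mul_div_comm, mul_comm ((k : ℝ) + 1) (Nat.factorial k : ℝ)]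

lemma b_pos (k : ℕ) : 0 < b k := by
  induction k with
  | zero => rw [b_zero]; norm_num
  | succ k ih =>
    rw [b_succ]
    have h : (0:ℝ) < (1 / 2 + k) / (k + 1) := by positivity
    positivity

lemma b_antitone (k : ℕ) : b (k + 1) ≤ b k := by
  rw [b_succ]
  have h : ((1:ℝ) / 2 + k) / (k + 1) ≤ 1 := by
    rw [div_le_one (by positivity)]; linarith
  nlinarith [b_pos k]

lemma b_le_one (k : ℕ) : b k ≤ 1 := by
  induction k with
  | zero => rw [b_zero]
  | succ k ih => exact le_trans (b_antitone k) ih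

lemma b_one : b 1 = 1 / 2 := by
  have := b_succ 0
  rw [b_zero] at this
  norm_num at this
  simpa using this

end Stmt7Aux

open Stmt7Aux

theorem stmt_7 (ξ : ℝ) (hξ : ξ ∈ Set.Ioo (-1 : ℝ) 0) :
    1 < (1 - ξ) * Fhyp ξ ^ 2 ∧ (1 - ξ ^ 2) * Fhyp ξ ^ 2 < 1 := by
  obtain ⟨hξ1, hξ0⟩ := hξ
  set f : ℕ → ℝ := fun k => b k ^ 2 * ξ ^ k with hf
  have hF : Fhyp ξ = ∑' k, f k := by
    rw [Fhyp]
    exact tsum_congr fun k => by rw [hf]; rfl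
  have habs : |ξ| < 1 := by rw [abs_lt]; constructor <;> linarith
  -- summability
  have hs : Summable f := by
    apply Summable.of_abs
    apply Summable.of_nonneg_of_le (fun k => abs_nonneg _) (fun k => ?_)
      (summable_geometric_of_lt_one (abs_nonneg ξ) habs)
    rw [hf]
    simp only
    rw [abs_mul, abs_pow, abs_pow]
    have h1 : |b k| ^ 2 ≤ 1 := by
      have := b_pos k; have := b_le_one k
      rw [abs_of_pos (b_pos k)]
      nlinarith
    nlinarith [pow_nonneg (abs_nonneg ξ) k, pow_nonneg (abs_nonneg (b k)) 2]
  have hs1 : Summable fun k => f (k + 1) := (summable_nat_add_iff 1).mpr hs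
  have hs2 : Summable fun k => f (k + 2) := (summable_nat_add_iff 2).mpr hs
  -- pair bounds
  have hc_le : ∀ k, b (k + 1) ^ 2 ≤ b k ^ 2 := fun k => by
    nlinarith [b_pos k, b_pos (k + 1), b_antitone k]
  have hpair_even : ∀ n : ℕ, 0 ≤ f (2 * n + 2) + f (2 * n + 3) := by
    intro n
    have h1 : f (2 * n + 2) + f (2 * n + 3)
        = (ξ ^ 2) ^ (n + 1) * (b (2 * n + 2) ^ 2 + b (2 * n + 3) ^ 2 * ξ) := by
      rw [hf]; simp only
      rw [show 2 * n + 3 = (2 * n + 2) + 1 from rfl, pow_succ,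
        show 2 * n + 2 = 2 * (n + 1) by ring, pow_mul]
      ring
    rw [h1]
    have h2 : 0 ≤ b (2 * n + 2) ^ 2 + b (2 * n + 3) ^ 2 * ξ := by
      have := hc_le (2 * n + 2)
      nlinarith [sq_nonneg (b (2 * n + 3))]
    positivity
  have hpair_odd : ∀ n : ℕ, f (2 * n + 1) + f (2 * n + 2) ≤ 0 := by
    intro n
    have h1 : f (2 * n + 1) + f (2 * n + 2)
        = ((ξ ^ n) ^ 2 * ξ) * (b (2 * n + 1) ^ 2 + b (2 * n + 2) ^ 2 * ξ) := by
      rw [hf]; simp only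
      rw [show 2 * n + 2 = (2 * n + 1) + 1 by ring, pow_succ, pow_succ, ← pow_mul]
      ring
    rw [h1]
    have h2 : 0 ≤ b (2 * n + 1) ^ 2 + b (2 * n + 2) ^ 2 * ξ := by
      have := hc_le (2 * n + 1)
      nlinarith [sq_nonneg (b (2 * n + 2))]
    have h3 : (ξ ^ n) ^ 2 * ξ ≤ 0 :=
      mul_nonpos_of_nonneg_of_nonpos (sq_nonneg _) (le_of_lt hξ0)
    exact mul_nonpos_of_nonpos_of_nonneg h3 h2
  have hf0 : f 0 = 1 := by rw [hf]; simp [b_zero]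
  have hf1 : f 1 = ξ / 4 := by rw [hf]; simp [b_one]; ring
  -- even/odd summability of shifted sequences
  have hinj1 : Function.Injective fun n : ℕ => 2 * n + 1 := by
    intro a b h; simp only at h; omega
  have hinj2 : Function.Injective fun n : ℕ => 2 * n + 2 := by
    intro a b h; simp only at h; omega
  have hinj3 : Function.Injective fun n : ℕ => 2 * n + 3 := by
    intro a b h; simp only at h; omega
  have hse1 : Summable fun n => f (2 * n + 1) := hs.comp_injective hinj1
  have hse2 : Summable fun n => f (2 * n + 2) := hs.comp_injective hinj2
  have hse3 : Summable fun n => f (2 * n + 3) := hs.comp_injective hinj3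
  -- upper bound : Fhyp ξ ≤ 1
  have hupper : Fhyp ξ ≤ 1 := by
    have h0 : ∑' k, f k = f 0 + ∑' k, f (k + 1) := Summable.tsum_eq_zero_add (f := f) hs
    have h1 : ∑' k, f (k + 1) = ∑' n, (f (2 * n + 1) + f (2 * n + 2)) := by
      rw [Summable.tsum_add hse1 hse2]
      exact (tsum_even_add_odd (f := fun k => f (k + 1)) hse1 hse2).symm
    have h2 : ∑' n, (f (2 * n + 1) + f (2 * n + 2)) ≤ 0 :=
      tsum_nonpos fun n => hpair_odd n
    rw [hF, h0, hf0, h1]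
    linarith
  -- lower bound : 1 + ξ/4 ≤ Fhyp ξ
  have hlower : 1 + ξ / 4 ≤ Fhyp ξ := by
    have h0 : ∑' k, f k = f 0 + ∑' k, f (k + 1) := Summable.tsum_eq_zero_add (f := f) hs
    have h0' : ∑' k, f (k + 1) = f 1 + ∑' k, f (k + 2) :=
      Summable.tsum_eq_zero_add (f := fun k => f (k + 1)) hs1
    have h1 : ∑' k, f (k + 2) = ∑' n, (f (2 * n + 2) + f (2 * n + 3)) := by
      rw [Summable.tsum_add hse2 hse3]
      exact (tsum_even_add_odd (f := fun k => f (k + 2)) hse2 hse3).symm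
    have h2 : 0 ≤ ∑' n, (f (2 * n + 2) + f (2 * n + 3)) :=
      tsum_nonneg fun n => hpair_even n
    rw [hF, h0, h0', hf0, hf1, h1]
    linarith
  have hFpos : 0 < Fhyp ξ := by nlinarith
  constructor
  · nlinarith [sq_nonneg (Fhyp ξ - (1 + ξ / 4)), sq_nonneg ξ,
      mul_nonneg (mul_nonneg (by linarith : (0:ℝ) ≤ 1 - ξ)
        (by linarith : (0:ℝ) ≤ Fhyp ξ - (1 + ξ / 4)))
        (by nlinarith : (0:ℝ) ≤ Fhyp ξ + (1 + ξ / 4))]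
  · have hsq : Fhyp ξ ^ 2 ≤ 1 := by nlinarith
    have hpos2 : 0 < ξ ^ 2 * Fhyp ξ ^ 2 := by
      have : ξ ≠ 0 := ne_of_lt hξ0
      positivity
    nlinarith

end
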